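/- Gordon's lemma (restated): Let A_k denote the k-step transfer matrices of a one-dimensional discrete Schrödinger cocycle at energy E and phase θ, and let φ be a solution of Hφ = Eφ with ‖(φ_0, φ_{−1})ᵀ‖ = 1. Suppose there is c > 0 and a sequence q_n → ∞ such that ‖(A_{q_n}²(θ) − A_{2q_n}(θ))(φ_0, φ_{−1})ᵀ‖ ≤ e^{−c q_n} and ‖(A_{q_n}^{−1}(θ) − A_{q_n}^{−1}(θ − q_n α))(φ_0, φ_{−1})ᵀ‖ ≤ e^{−c q_n}. Then max{‖(φ_{q_n}, φ_{q_n−1})ᵀ‖, ‖(φ_{−q_n}, φ_{−q_n−1})ᵀ‖, ‖(φ_{2q_n}, φ_{2q_n−1})ᵀ‖} ≥ 1/4 for all sufficiently large n. -/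

import Mathlib

open Matrix Real

/-- Euclidean norm of a vector in `ℝ²`. -/
noncomputable def vnorm12 (w : Fin 2 → ℝ) : ℝ := Real.sqrt (w 0 ^ 2 + w 1 ^ 2)

/-- One-step transfer matrix `A(x) = [[E - v x, -1],[1,0]]`. -/
noncomputable def tm12 (E : ℝ) (v : ℝ → ℝ) (x : ℝ) : Matrix (Fin 2) (Fin 2) ℝ :=
  !![E - v x, -1; 1, 0]

/-- `k`-step transfer matrix `A_k(x) = A(x+(k-1)α) ⋯ A(x)`. -/
noncomputable def tmk12 (E : ℝ) (v : ℝ → ℝ) (α : ℝ) : ℕ → ℝ → Matrix (Fin 2) (Fin 2) ℝ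
  | 0, _ => 1
  | k + 1, x => tm12 E v (x + k * α) * tmk12 E v α k x

/-! ### Auxiliary lemmas -/

noncomputable def toE12 (w : Fin 2 → ℝ) : EuclideanSpace ℝ (Fin 2) :=
  (WithLp.equiv 2 (Fin 2 → ℝ)).symm w

lemma vnorm12_eq_norm (w : Fin 2 → ℝ) : vnorm12 w = ‖toE12 w‖ := by
  rw [EuclideanSpace.norm_eq]
  simp [vnorm12, toE12, Fin.sum_univ_two, sq_abs]

lemma toE12_sub (u w : Fin 2 → ℝ) : toE12 (u - w) = toE12 u - toE12 w := rfl
lemma toE12_smul (t : ℝ) (w : Fin 2 → ℝ) : toE12 (t • w) = t • toE12 w := rfl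

lemma vnorm12_le_sub_add (x y : Fin 2 → ℝ) :
    vnorm12 x ≤ vnorm12 (x - y) + vnorm12 y := by
  rw [vnorm12_eq_norm, vnorm12_eq_norm, vnorm12_eq_norm, toE12_sub]
  calc ‖toE12 x‖ = ‖(toE12 x - toE12 y) + toE12 y‖ := by rw [sub_add_cancel]
    _ ≤ ‖toE12 x - toE12 y‖ + ‖toE12 y‖ := norm_add_le _ _

lemma tm12_mulVec (E : ℝ) (v : ℝ → ℝ) (x a b : ℝ) :
    tm12 E v x *ᵥ ![a, b] = ![(E - v x) * a - b, a] := by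
  funext i
  fin_cases i
  · simp [tm12, Matrix.mulVec, dotProduct, Fin.sum_univ_two, Fin.mk_zero, Fin.mk_one]
    ring
  · simp [tm12, Matrix.mulVec, dotProduct, Fin.sum_univ_two, Fin.mk_zero, Fin.mk_one]

lemma mulVec_two (M : Matrix (Fin 2) (Fin 2) ℝ) (a b : ℝ) :
    M *ᵥ ![a, b] = ![M 0 0 * a + M 0 1 * b, M 1 0 * a + M 1 1 * b] := by
  funext i
  fin_cases i <;>
    simp [Matrix.mulVec, dotProduct, Fin.sum_univ_two, Fin.mk_zero, Fin.mk_one]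

lemma det_tmk12 (E : ℝ) (v : ℝ → ℝ) (α : ℝ) (k : ℕ) (x : ℝ) :
    (tmk12 E v α k x).det = 1 := by
  induction k with
  | zero => simp [tmk12]
  | succ k ih =>
    rw [tmk12, Matrix.det_mul, ih]
    simp [tm12, Matrix.det_fin_two_of]

lemma fwd12 (E α θ : ℝ) (v : ℝ → ℝ) (φ : ℤ → ℝ)
    (hφ : ∀ n : ℤ, φ (n + 1) + φ (n - 1) + v (θ + n * α) * φ n = E * φ n) :
    ∀ (k : ℕ) (m : ℤ), tmk12 E v α k (θ + m * α) *ᵥ ![φ m, φ (m - 1)]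
      = ![φ (m + k), φ (m + k - 1)] := by
  intro k
  induction k with
  | zero => intro m; simp [tmk12]
  | succ k ih =>
    intro m
    have hx : θ + (m : ℝ) * α + (k : ℝ) * α = θ + ((m + k : ℤ) : ℝ) * α := by push_cast; ring
    have hstep : φ (m + k + 1)
        = E * φ (m + k) - φ (m + k - 1) - v (θ + ((m + k : ℤ) : ℝ) * α) * φ (m + k) := by
      have := hφ (m + k); linarith
    have h0 : (m + ((k + 1 : ℕ) : ℤ)) = m + k + 1 := by push_cast; ring
    rw [tmk12, ← Matrix.mulVec_mulVec, ih m, hx, tm12_mulVec, h0,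
      show m + (k : ℤ) + 1 - 1 = m + k from by ring, hstep]
    funext i
    fin_cases i
    · simp; ring
    · simp

lemma inv_mulVec_of12 (M : Matrix (Fin 2) (Fin 2) ℝ) (h : M.det = 1)
    (u w : Fin 2 → ℝ) (hMu : M *ᵥ u = w) : M⁻¹ *ᵥ w = u := by
  rw [← hMu, Matrix.mulVec_mulVec, Matrix.nonsing_inv_mul _ (by rw [h]; exact isUnit_one),
    Matrix.one_mulVec]

lemma inv_two12 (M : Matrix (Fin 2) (Fin 2) ℝ) (h : M.det = 1) :
    M⁻¹ = !![M 1 1, -(M 0 1); -(M 1 0), M 0 0] := by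
  apply Matrix.inv_eq_right_inv
  rw [Matrix.det_fin_two] at h
  rw [Matrix.eta_fin_two M]
  ext i j
  fin_cases i <;> fin_cases j <;>
    simp [Matrix.mul_apply, Fin.sum_univ_two, Matrix.one_apply] <;> linarith

lemma half_le_max12 (B : Matrix (Fin 2) (Fin 2) ℝ) (hdet : B.det = 1)
    (w : Fin 2 → ℝ) (hw : vnorm12 w = 1) :
    (1:ℝ)/2 ≤ max (max (vnorm12 (B *ᵥ w)) (vnorm12 (B⁻¹ *ᵥ w))) (vnorm12 ((B * B) *ᵥ w)) := by
  have hdet' := hdet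
  rw [Matrix.det_fin_two] at hdet'
  set t := B.trace with ht
  have htr : t = B 0 0 + B 1 1 := Matrix.trace_fin_two B
  have hwv : w = ![w 0, w 1] := by
    funext i; fin_cases i <;> simp
  have hid1 : B⁻¹ *ᵥ w = t • w - B *ᵥ w := by
    rw [inv_two12 B hdet, hwv, mulVec_two, mulVec_two]
    funext i
    fin_cases i <;>
      simp [htr, Matrix.smul_cons, Matrix.smul_empty] <;> ring
  have hid2 : (B * B) *ᵥ w = t • (B *ᵥ w) - w := by
    rw [← Matrix.mulVec_mulVec, hwv, mulVec_two, mulVec_two]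
    funext i
    fin_cases i
    · simp [htr]
      linear_combination (-(w 0)) * hdet'
    · simp [htr]
      linear_combination (-(w 1)) * hdet'
  set u := toE12 (B *ᵥ w) with hu
  have hnu : vnorm12 (B *ᵥ w) = ‖u‖ := vnorm12_eq_norm _
  have hni : vnorm12 (B⁻¹ *ᵥ w) = ‖t • toE12 w - u‖ := by
    rw [vnorm12_eq_norm, hid1, toE12_sub, toE12_smul]
  have hn2 : vnorm12 ((B * B) *ᵥ w) = ‖t • u - toE12 w‖ := by
    rw [vnorm12_eq_norm, hid2, toE12_sub, toE12_smul]
  have hw1 : ‖toE12 w‖ = 1 := by rw [← vnorm12_eq_norm, hw]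
  rw [hnu, hni, hn2]
  rcases le_or_gt 1 |t| with hT | hT
  · have h3 : |t| ≤ ‖t • toE12 w - u‖ + ‖u‖ := by
      calc |t| = ‖t • toE12 w‖ := by rw [norm_smul, hw1]; simp
        _ = ‖(t • toE12 w - u) + u‖ := by rw [sub_add_cancel]
        _ ≤ ‖t • toE12 w - u‖ + ‖u‖ := norm_add_le _ _
    rcases le_or_gt (1/2 : ℝ) ‖u‖ with h | h
    · exact le_trans h (le_trans (le_max_left _ _) (le_max_left _ _))
    · have : (1:ℝ)/2 ≤ ‖t • toE12 w - u‖ := by linarith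
      exact le_trans this (le_trans (le_max_right _ _) (le_max_left _ _))
  · rcases le_or_gt (1/2 : ℝ) ‖u‖ with h | h
    · exact le_trans h (le_trans (le_max_left _ _) (le_max_left _ _))
    · have h4 : 1 - |t| * ‖u‖ ≤ ‖t • u - toE12 w‖ := by
        have := norm_sub_norm_le (toE12 w) (t • u)
        rw [hw1, norm_smul] at this
        calc 1 - |t| * ‖u‖ ≤ ‖toE12 w - t • u‖ := by simpa using this
          _ = ‖t • u - toE12 w‖ := norm_sub_rev _ _
      have h5 : |t| * ‖u‖ ≤ 1/2 := by nlinarith [abs_nonneg t, norm_nonneg u]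
      have : (1:ℝ)/2 ≤ ‖t • u - toE12 w‖ := by linarith
      exact le_trans this (le_max_right _ _)

/-- Gordon's lemma: if the transfer matrices of a discrete Schrödinger cocycle at energy
`E` have the double-almost-repetition properties along a sequence `q n → ∞`, then any
normalized solution `φ` of `Hφ = Eφ` satisfies
`max {‖(φ_{q_n}, φ_{q_n-1})‖, ‖(φ_{-q_n}, φ_{-q_n-1})‖, ‖(φ_{2q_n}, φ_{2q_n-1})‖} ≥ 1/4`
for all sufficiently large `n`. -/
theorem stmt12 (E α θ c : ℝ) (hc : 0 < c) (v : ℝ → ℝ) (φ : ℤ → ℝ)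
    (hφ : ∀ n : ℤ, φ (n + 1) + φ (n - 1) + v (θ + n * α) * φ n = E * φ n)
    (hnorm : vnorm12 ![φ 0, φ (-1)] = 1)
    (q : ℕ → ℕ) (hq : Filter.Tendsto q Filter.atTop Filter.atTop)
    (h1 : ∀ n, vnorm12 (((tmk12 E (fun x => v x) α (q n) θ) ^ 2
          - tmk12 E (fun x => v x) α (2 * q n) θ).mulVec ![φ 0, φ (-1)])
        ≤ Real.exp (-c * q n))
    (h2 : ∀ n, vnorm12 (((tmk12 E (fun x => v x) α (q n) θ)⁻¹
          - (tmk12 E (fun x => v x) α (q n) (θ - q n * α))⁻¹).mulVec ![φ 0, φ (-1)])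
        ≤ Real.exp (-c * q n)) :
    ∃ N : ℕ, ∀ n ≥ N,
      max (max (vnorm12 ![φ (q n : ℤ), φ ((q n : ℤ) - 1)])
          (vnorm12 ![φ (-(q n : ℤ)), φ (-(q n : ℤ) - 1)]))
        (vnorm12 ![φ (2 * (q n : ℤ)), φ (2 * (q n : ℤ) - 1)]) ≥ 1/4 := by
  -- choose N so that the error is at most 1/4
  obtain ⟨N, hN⟩ : ∃ N : ℕ, ∀ n ≥ N, Real.exp (-c * q n) ≤ 1/4 := by
    have hA : Filter.Tendsto (fun n => (q n : ℝ)) Filter.atTop Filter.atTop :=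
      tendsto_natCast_atTop_atTop.comp hq
    have hB : Filter.Tendsto (fun n => c * (q n : ℝ)) Filter.atTop Filter.atTop :=
      hA.const_mul_atTop hc
    have hC : Filter.Tendsto (fun n => -c * (q n : ℝ)) Filter.atTop Filter.atBot := by
      have := Filter.tendsto_neg_atTop_atBot.comp hB
      simpa [neg_mul, Function.comp_def] using this
    have hD : Filter.Tendsto (fun n => Real.exp (-c * q n)) Filter.atTop (nhds 0) :=
      Real.tendsto_exp_atBot.comp hC
    have hE := hD.eventually_lt_const (show (0:ℝ) < 1/4 by norm_num)
    rw [Filter.eventually_atTop] at hE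
    obtain ⟨N, hN⟩ := hE
    exact ⟨N, fun n hn => le_of_lt (hN n hn)⟩
  refine ⟨N, fun n hn => ?_⟩
  set Q := q n with hQ
  set w : Fin 2 → ℝ := ![φ 0, φ (-1)] with hwdef
  set B := tmk12 E v α Q θ with hBdef
  set C := tmk12 E v α Q (θ - (Q : ℝ) * α) with hCdef
  have hBw : B *ᵥ w = ![φ (Q : ℤ), φ ((Q : ℤ) - 1)] := by
    have := fwd12 E α θ v φ hφ Q 0
    simpa [hwdef, hBdef] using this
  have hB2w : tmk12 E v α (2 * Q) θ *ᵥ w = ![φ (2 * (Q : ℤ)), φ (2 * (Q : ℤ) - 1)] := by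
    have h := fwd12 E α θ v φ hφ (2 * Q) 0
    have hcast : (((2 * Q : ℕ) : ℤ)) = 2 * (Q : ℤ) := by push_cast; ring
    rw [hcast] at h
    simpa [hwdef] using h
  have hCw : C *ᵥ ![φ (-(Q : ℤ)), φ (-(Q : ℤ) - 1)] = w := by
    have h := fwd12 E α θ v φ hφ Q (-(Q : ℤ))
    have harg : θ + ((-(Q : ℤ) : ℤ) : ℝ) * α = θ - (Q : ℝ) * α := by push_cast; ring
    rw [harg] at h
    have hi0 : (-(Q : ℤ) + (Q : ℕ)) = 0 := by push_cast; ring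
    rw [hi0] at h
    simpa [hwdef, hCdef] using h
  have hCinv : C⁻¹ *ᵥ w = ![φ (-(Q : ℤ)), φ (-(Q : ℤ) - 1)] :=
    inv_mulVec_of12 C (det_tmk12 E v α Q _) _ _ hCw
  -- estimates from the hypotheses
  have e1 := h1 n
  have e2 := h2 n
  rw [show (fun x => v x) = v from rfl] at e1 e2
  rw [← hQ] at e1 e2
  rw [← hBdef, pow_two, Matrix.sub_mulVec, hB2w] at e1
  rw [← hBdef, ← hCdef, Matrix.sub_mulVec, hCinv] at e2
  have hkey := half_le_max12 B (det_tmk12 E v α Q θ) w hnorm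
  set ε := Real.exp (-c * (Q : ℝ)) with hε
  have hε4 : ε ≤ 1/4 := hN n hn
  -- compare the three norms
  have hna : vnorm12 (B *ᵥ w) = vnorm12 ![φ (Q : ℤ), φ ((Q : ℤ) - 1)] := by rw [hBw]
  have hnb : vnorm12 (B⁻¹ *ᵥ w)
      ≤ vnorm12 ![φ (-(Q : ℤ)), φ (-(Q : ℤ) - 1)] + ε := by
    have := vnorm12_le_sub_add (B⁻¹ *ᵥ w) ![φ (-(Q : ℤ)), φ (-(Q : ℤ) - 1)]
    linarith
  have hnc : vnorm12 ((B * B) *ᵥ w)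
      ≤ vnorm12 ![φ (2 * (Q : ℤ)), φ (2 * (Q : ℤ) - 1)] + ε := by
    have := vnorm12_le_sub_add ((B * B) *ᵥ w) ![φ (2 * (Q : ℤ)), φ (2 * (Q : ℤ) - 1)]
    linarith
  set a := vnorm12 ![φ (Q : ℤ), φ ((Q : ℤ) - 1)] with ha
  set b := vnorm12 ![φ (-(Q : ℤ)), φ (-(Q : ℤ) - 1)] with hb
  set d := vnorm12 ![φ (2 * (Q : ℤ)), φ (2 * (Q : ℤ) - 1)] with hd
  show 1/4 ≤ max (max a b) d
  rcases le_max_iff.mp hkey with h | h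
  · rcases le_max_iff.mp h with h' | h'
    · have : (1:ℝ)/4 ≤ a := by rw [← hna]; linarith
      exact le_trans this (le_trans (le_max_left a b) (le_max_left _ _))
    · have : (1:ℝ)/4 ≤ b := by linarith
      exact le_trans this (le_trans (le_max_right a b) (le_max_left _ _))
  · have : (1:ℝ)/4 ≤ d := by linarith
    exact le_trans this (le_max_right _ _)
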